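/- Let φ be a 3-CNF formula over variables x₁,…,x_k with clauses C₁,…,C_n, and define F : ({0,1})^k → ℝ by F(x) = ∑_{i=1}^n (1 − max(0, 1 − (ℓ_{i,1}(x) + ℓ_{i,2}(x) + ℓ_{i,3}(x)))), where each literal ℓ_{i,j}(x) is either x_m or 1 − x_m. Then F(x) = n if and only if the Boolean assignment corresponding to x satisfies φ; consequently, the number of satisfying assignments of φ equals |{x ∈ {0,1}^k : F(x) = n}|. -/
import Mathlib


/-- The `0/1` real encoding of a Boolean. -/
def boolToReal (b : Bool) : ℝ := if b then 1 else 0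

/-- Real value of a literal `(m, neg)` (variable `x_m`, negated iff `neg`) under the
`0/1` encoding of a Boolean assignment `x`. -/
def litVal {k : ℕ} (x : Fin k → Bool) (l : Fin k × Bool) : ℝ :=
  if l.2 then 1 - boolToReal (x l.1) else boolToReal (x l.1)

/-- ReLU-network encoding of a 3-CNF formula with clauses given by `lit`: sum over clauses
of the disjunction gadget applied to the three literal values. -/
def cnfNet {k n : ℕ} (lit : Fin n → Fin 3 → Fin k × Bool) (x : Fin k → Bool) : ℝ :=
  ∑ i : Fin n,
    (1 - max 0 (1 - (litVal x (lit i 0) + litVal x (lit i 1) + litVal x (lit i 2))))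

/-- Truth of a literal `(m, neg)` under a Boolean assignment `x`. -/
def litTrue {k : ℕ} (x : Fin k → Bool) (l : Fin k × Bool) : Prop :=
  if l.2 then x l.1 = false else x l.1 = true

lemma lit_cases {k : ℕ} (x : Fin k → Bool) (l : Fin k × Bool) :
    (litVal x l = 1 ∧ litTrue x l) ∨ (litVal x l = 0 ∧ ¬ litTrue x l) := by
  rcases l with ⟨m, nb⟩
  cases nb <;> cases h : x m <;> simp [litVal, litTrue, boolToReal, h]

lemma clause_term {k : ℕ} (x : Fin k → Bool) (a b c : Fin k × Bool) :
    (1 - max 0 (1 - (litVal x a + litVal x b + litVal x c)) ≤ 1) ∧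
    (1 - max 0 (1 - (litVal x a + litVal x b + litVal x c)) = 1 ↔
      (litTrue x a ∨ litTrue x b ∨ litTrue x c)) := by
  rcases lit_cases x a with ⟨ha, ha'⟩ | ⟨ha, ha'⟩ <;>
  rcases lit_cases x b with ⟨hb, hb'⟩ | ⟨hb, hb'⟩ <;>
  rcases lit_cases x c with ⟨hc, hc'⟩ | ⟨hc, hc'⟩ <;>
  rw [ha, hb, hc] <;> norm_num <;> tauto

/-- Parsimonious reduction from #3SAT: the network outputs `n` exactly on the satisfying
assignments of the 3-CNF formula, so the counts coincide. -/
theorem stmt_16 (k n : ℕ) (lit : Fin n → Fin 3 → Fin k × Bool) :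
    (∀ x : Fin k → Bool,
        cnfNet lit x = (n : ℝ) ↔ ∀ i : Fin n, ∃ j : Fin 3, litTrue x (lit i j)) ∧
      Nat.card {x : Fin k → Bool // ∀ i : Fin n, ∃ j : Fin 3, litTrue x (lit i j)}
        = Nat.card {x : Fin k → Bool // cnfNet lit x = (n : ℝ)} := by
  have main : ∀ x : Fin k → Bool,
      cnfNet lit x = (n : ℝ) ↔ ∀ i : Fin n, ∃ j : Fin 3, litTrue x (lit i j) := by
    intro x
    have hn : (n : ℝ) = ∑ _i : Fin n, (1 : ℝ) := by simp
    rw [cnfNet, hn,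
      Finset.sum_eq_sum_iff_of_le (fun i _ => (clause_term x (lit i 0) (lit i 1) (lit i 2)).1)]
    constructor
    · intro h i
      have := (clause_term x (lit i 0) (lit i 1) (lit i 2)).2.mp (h i (Finset.mem_univ i))
      rcases this with h | h | h
      exacts [⟨0, h⟩, ⟨1, h⟩, ⟨2, h⟩]
    · intro h i _
      rcases h i with ⟨j, hj⟩
      refine (clause_term x (lit i 0) (lit i 1) (lit i 2)).2.mpr ?_
      fin_cases j <;> tauto
  refine ⟨main, ?_⟩
  exact Nat.card_congr (Equiv.subtypeEquivRight fun x => (main x).symm)
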